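/- (Approachability) Let H and H' be bounded histories and, for p > 0, let H_p∗H' denote the concatenated history (H_p∗H')(s) := H(s) for 0 ≤ s < p and := H'(s−p) for s ≥ p (H_p being the process of duration p generated by H on [0,p)). Then lim_{p→+∞} d(H_p∗H', H) = 0. -/

import Mathlib

open MeasureTheory Filter Topology
open scoped ENNReal Classical

noncomputable section

/-- The state space `V = M₃ₓ₃(ℝ) × ℝᵏ × M_{k×3}(ℝ)`, each factor Euclidean. -/
abbrev V (k : ℕ) :=
  EuclideanSpace ℝ (Fin 3 × Fin 3) × EuclideanSpace ℝ (Fin k) ×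
    EuclideanSpace ℝ (Fin k × Fin 3)

/-- The norm `‖v‖ := |v_W| + |v_ν| + |v_N|`. -/
def vnorm {k : ℕ} (v : V k) : ℝ := ‖v.1‖ + ‖v.2.1‖ + ‖v.2.2‖

/-- The inner product of the Euclidean factors. -/
def vinner {k : ℕ} (v w : V k) : ℝ :=
  (inner ℝ v.1 w.1 : ℝ) + (inner ℝ v.2.1 w.2.1 : ℝ) + (inner ℝ v.2.2 w.2.2 : ℝ)

/-- The operator norm on `End(V)` corresponding to `vnorm`. -/
def opnorm {k : ℕ} (A : V k →L[ℝ] V k) : ℝ :=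
  sSup ((fun v => vnorm (A v)) '' {v : V k | vnorm v ≤ 1})

/-- A history: a bounded, right-continuous map `[0,∞) → V` of bounded variation. -/
structure IsHistory {k : ℕ} (H : ℝ → V k) : Prop where
  bounded : ∃ C : ℝ, ∀ s : ℝ, 0 ≤ s → vnorm (H s) ≤ C
  rightCont : ∀ s : ℝ, 0 ≤ s → ContinuousWithinAt H (Set.Ici s) s
  bv : BoundedVariationOn H (Set.Ici 0)

/-- The relaxation function `G` is absolutely continuous with Bochner-integrable
derivative `G'` on `[0,∞)`. -/
structure IsRelaxation {k : ℕ} (G G' : ℝ → (V k →L[ℝ] V k)) : Prop where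
  integrable : IntegrableOn G' (Set.Ici 0)
  ftc : ∀ t : ℝ, 0 ≤ t → G t = G 0 + ∫ s in Set.Icc (0:ℝ) t, G' s

/-- The distance `d(H,H') := sup_{t>0} ‖∫₀^∞ Ġ(s+t)(H(s) − H'(s)) ds‖`. -/
def hdist {k : ℕ} (G' : ℝ → (V k →L[ℝ] V k)) (H H' : ℝ → V k) : ℝ≥0∞ :=
  ⨆ t : Set.Ioi (0:ℝ), ENNReal.ofReal
    (vnorm (∫ s in Set.Ioi (0:ℝ), (G' (s + (t:ℝ))) (H s - H' s)))

/-- The response functional `Λ(H) := G(0)H(0) + ∫₀^∞ Ġ(s)H(s) ds`. -/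
def response {k : ℕ} (G G' : ℝ → (V k →L[ℝ] V k)) (H : ℝ → V k) : V k :=
  (G 0) (H 0) + ∫ s in Set.Ioi (0:ℝ), (G' s) (H s)

/-- The prolongation `K_p∗H` of a history `H` by a process `K` of duration `p`. -/
def prolong {k : ℕ} (p : ℝ) (K H : ℝ → V k) : ℝ → V k :=
  fun s => if s < p then K s else H (s - p)

/-- `K` (of duration `p`) prolongs `H`: `lim_{s↗p} K(s) = H(0)`. -/
def Prolongs {k : ℕ} (p : ℝ) (K H : ℝ → V k) : Prop :=
  Tendsto K (𝓝[<] p) (𝓝 (H 0))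

/-- Equivalence of histories: same initial value and equal responses under every
prolongation. -/
def EquivHist {k : ℕ} (G G' : ℝ → (V k →L[ℝ] V k)) (H H' : ℝ → V k) : Prop :=
  H 0 = H' 0 ∧ ∀ p : ℝ, 0 < p → ∀ K : ℝ → V k, Prolongs p K H →
    response G G' (prolong p K H) = response G G' (prolong p K H')

/-- The shifted history `Hˢ(u) := H(s+u)`. -/
def shift {k : ℕ} (H : ℝ → V k) (s : ℝ) : ℝ → V k := fun u => H (s + u)

/-- The work density `w(H) := ∫₀^∞ ⟨Λ(Hˢ), Ḣ(s)⟩ ds` of a differentiable history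
`H` with derivative `Hd`. -/
def work {k : ℕ} (G G' : ℝ → (V k →L[ℝ] V k)) (H Hd : ℝ → V k) : ℝ :=
  ∫ s in Set.Ioi (0:ℝ), vinner (response G G' (shift H s)) (Hd s)

/-- A differentiable history: locally absolutely continuous with derivative
`Hd ∈ L¹`. -/
structure IsDiffHistory {k : ℕ} (H Hd : ℝ → V k) : Prop where
  hist : IsHistory H
  integrable : IntegrableOn Hd (Set.Ici 0)
  ftc : ∀ t : ℝ, 0 ≤ t → H t = H 0 + ∫ s in Set.Icc (0:ℝ) t, Hd s

/-- A differentiable process of duration `p` with derivative `Kd`. -/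
structure IsDiffProcess {k : ℕ} (p : ℝ) (K Kd : ℝ → V k) : Prop where
  pos : 0 < p
  integrable : IntegrableOn Kd (Set.Icc 0 p)
  ftc : ∀ t : ℝ, 0 ≤ t → t < p → K t = K 0 + ∫ s in Set.Icc (0:ℝ) t, Kd s

/-- The work over a prolongation: `w(K_p, H) := w(K_p∗H) − w(H)`. -/
def workP {k : ℕ} (G G' : ℝ → (V k →L[ℝ] V k)) (p : ℝ) (K Kd H Hd : ℝ → V k) : ℝ :=
  work G G' (prolong p K H) (prolong p Kd Hd) - work G G' H Hd

/-- The relaxed work `w^r_{H'}(H)` from the differentiable history `H'`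
(with derivative `H'd`) to the history `H`. -/
def relaxedWork {k : ℕ} (G G' : ℝ → (V k →L[ℝ] V k)) (H' H'd H : ℝ → V k) : EReal :=
  sInf { c : EReal | ∃ K Kd : ℝ → ℝ → V k,
    (∀ p : ℝ, 0 < p → IsDiffProcess p (K p) (Kd p) ∧ Prolongs p (K p) H') ∧
    Tendsto (fun p => hdist G' (prolong p (K p) H') H) atTop (𝓝 0) ∧
    c = Filter.liminf (fun p => ((workP G G' p (K p) (Kd p) H' H'd : ℝ) : EReal)) atTop }

/-- `H` is `w`-approachable from `H'`: there is a family of processes prolonging `H'`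
approaching `H` in the distance `d`, along which the work converges. -/
def WApproachable {k : ℕ} (G G' : ℝ → (V k →L[ℝ] V k)) (H' H'd H : ℝ → V k) : Prop :=
  ∃ K Kd : ℝ → ℝ → V k, ∃ L : ℝ,
    (∀ p : ℝ, 0 < p → IsDiffProcess p (K p) (Kd p) ∧ Prolongs p (K p) H') ∧
    Tendsto (fun p => hdist G' (prolong p (K p) H') H) atTop (𝓝 0) ∧
    Tendsto (fun p => workP G G' p (K p) (Kd p) H' H'd) atTop (𝓝 L)

/-- `Q(v) := ½⟨G(∞)v, v⟩`. -/
def Qform {k : ℕ} (Ginf : V k →L[ℝ] V k) (v : V k) : ℝ := (1/2) * vinner (Ginf v) v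

/-- The relaxation function is dissipative: `w(H) ≥ 0` for every differentiable
history with `H(∞) = 0`. -/
def DissipativeRelax {k : ℕ} (G G' : ℝ → (V k →L[ℝ] V k)) : Prop :=
  ∀ H Hd : ℝ → V k, IsDiffHistory H Hd → Tendsto H atTop (𝓝 (0 : V k)) →
    0 ≤ work G G' H Hd

/-- `w` satisfies the dissipation property along the history `H`. -/
def DissipationProperty {k : ℕ} (G G' : ℝ → (V k →L[ℝ] V k)) (H Hd : ℝ → V k) : Prop :=
  ∀ ε : ℝ, 0 < ε → ∃ δ : ℝ, 0 < δ ∧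
    ∀ p : ℝ, ∀ K Kd : ℝ → V k, IsDiffProcess p K Kd → Prolongs p K H →
      hdist G' (prolong p K H) H < ENNReal.ofReal δ → -ε < workP G G' p K Kd H Hd

/-- A free energy (lower potential for the work `w`). -/
def IsFreeEnergy {k : ℕ} (G G' : ℝ → (V k →L[ℝ] V k)) (ψ : (ℝ → V k) → EReal) : Prop :=
  ∀ H Hd H' H'd : ℝ → V k, IsDiffHistory H Hd → IsDiffHistory H' H'd →
    ∀ ε : ℝ, 0 < ε → ∃ δ : ℝ, 0 < δ ∧
      ∀ p : ℝ, ∀ K Kd : ℝ → V k, IsDiffProcess p K Kd → Prolongs p K H' →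
        hdist G' (prolong p K H') H < ENNReal.ofReal δ →
        ψ H - ψ H' < ((workP G G' p K Kd H' H'd + ε : ℝ) : EReal)
section AuxApproach

variable {k : ℕ}

lemma vnorm_nonneg' (v : V k) : 0 ≤ vnorm v := by
  unfold vnorm
  have h1 := norm_nonneg v.1
  have h2 := norm_nonneg v.2.1
  have h3 := norm_nonneg v.2.2
  linarith

lemma norm_le_vnorm' (v : V k) : ‖v‖ ≤ vnorm v := by
  have hv : ‖v‖ = max ‖v.1‖ (max ‖v.2.1‖ ‖v.2.2‖) := by
    rw [Prod.norm_def, Prod.norm_def]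
  unfold vnorm
  rw [hv]
  have h1 := norm_nonneg v.1
  have h2 := norm_nonneg v.2.1
  have h3 := norm_nonneg v.2.2
  exact max_le (by linarith) (max_le (by linarith) (by linarith))

lemma vnorm_le_three_norm' (v : V k) : vnorm v ≤ 3 * ‖v‖ := by
  have h1 : ‖v.1‖ ≤ ‖v‖ := norm_fst_le v
  have h2 : ‖v.2‖ ≤ ‖v‖ := norm_snd_le v
  have h3 : ‖v.2.1‖ ≤ ‖v.2‖ := norm_fst_le v.2
  have h4 : ‖v.2.2‖ ≤ ‖v.2‖ := norm_snd_le v.2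
  unfold vnorm
  linarith

lemma vnorm_sub_le' (a b : V k) : vnorm (a - b) ≤ vnorm a + vnorm b := by
  have h1 := norm_sub_le a.1 b.1
  have h2 := norm_sub_le a.2.1 b.2.1
  have h3 := norm_sub_le a.2.2 b.2.2
  simp only [vnorm, Prod.fst_sub, Prod.snd_sub]
  linarith

end AuxApproach

/-- Approachability: for bounded histories `H` and `H'`,
`d(H_p∗H', H) → 0` as `p → ∞`, where `H_p∗H'` is the concatenation of the process
generated by `H` on `[0,p)` with `H'`. -/
theorem hdist_approachability {k : ℕ} (G G' : ℝ → (V k →L[ℝ] V k))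
    (hG : IsRelaxation G G') (H H' : ℝ → V k)
    (hH : IsHistory H) (hH' : IsHistory H') :
    Tendsto (fun p : ℝ => hdist G' (prolong p H H') H) atTop (𝓝 0) := by
  obtain ⟨C, hC⟩ := hH.bounded
  obtain ⟨C', hC'⟩ := hH'.bounded
  have hC0 : 0 ≤ C := le_trans (vnorm_nonneg' (H 0)) (hC 0 le_rfl)
  have hC'0 : 0 ≤ C' := le_trans (vnorm_nonneg' (H' 0)) (hC' 0 le_rfl)
  set M : ℝ := C + C' with hM
  have hM0 : 0 ≤ M := add_nonneg hC0 hC'0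
  have hGn : IntegrableOn (fun u => ‖G' u‖) (Set.Ici (0:ℝ)) := hG.integrable.norm
  set Φ : ℝ → ℝ := fun p => ∫ u in Set.Ici p, ‖G' u‖ with hΦdef
  -- Φ tends to 0
  have hΦ0 : Tendsto Φ atTop (𝓝 0) := by
    have h := tendsto_integral_filter_of_dominated_convergence
      (μ := volume.restrict (Set.Ici (0:ℝ)))
      (F := fun (p : ℝ) (u : ℝ) => Set.indicator (Set.Ici p) (fun u => ‖G' u‖) u)
      (f := fun _ => (0:ℝ)) (l := atTop)
      (bound := fun u => ‖G' u‖)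
      (by
        filter_upwards with p
        exact hGn.aestronglyMeasurable.indicator measurableSet_Ici)
      (by
        filter_upwards with p
        filter_upwards with u
        by_cases hu : u ∈ Set.Ici p
        · rw [Set.indicator_of_mem hu]
          exact le_of_eq (norm_norm _)
        · rw [Set.indicator_of_notMem hu]
          rw [norm_zero]
          exact norm_nonneg _)
      hGn
      (by
        filter_upwards with u
        have hev : (fun p => Set.indicator (Set.Ici p) (fun u => ‖G' u‖) u)
            =ᶠ[atTop] fun _ => (0:ℝ) := by
          filter_upwards [eventually_gt_atTop u] with p hp
          exact Set.indicator_of_notMem (by simpa using not_le.2 hp) _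
        exact Tendsto.congr' hev.symm tendsto_const_nhds)
    simp only [integral_zero] at h
    refine h.congr' ?_
    filter_upwards [eventually_ge_atTop (0:ℝ)] with p hp
    rw [setIntegral_indicator measurableSet_Ici, Set.Ici_inter_Ici, max_eq_right hp]
  have hΦnn : ∀ p : ℝ, 0 ≤ Φ p := fun p =>
    setIntegral_nonneg measurableSet_Ici (fun u _ => norm_nonneg _)
  -- key estimate
  have key : ∀ p : ℝ, 0 < p → ∀ t : ℝ, 0 < t →
      vnorm (∫ s in Set.Ioi (0:ℝ), (G' (s + t)) (prolong p H H' s - H s))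
        ≤ 3 * (M * Φ p) := by
    intro p hp t ht
    set f : ℝ → V k := fun s => (G' (s + t)) (prolong p H H' s - H s) with hf
    set g : ℝ → ℝ := Set.indicator (Set.Ici p) (fun s => ‖G' (s + t)‖ * M) with hg
    have hmp : MeasurePreserving (· + t) (volume : Measure ℝ) volume :=
      measurePreserving_add_right volume t
    have hemb : MeasurableEmbedding (· + t : ℝ → ℝ) :=
      (MeasurableEquiv.addRight t).measurableEmbedding
    have hpre : (· + t : ℝ → ℝ) ⁻¹' (Set.Ici (p + t)) = Set.Ici p := by
      ext x
      simp [Set.mem_Ici]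
    have hint1 : IntegrableOn (fun u => ‖G' u‖) (Set.Ici (p + t)) :=
      hGn.mono_set (Set.Ici_subset_Ici.2 (by linarith))
    have hint2 : IntegrableOn (fun s => ‖G' (s + t)‖) (Set.Ici p) := by
      have h := (hmp.integrableOn_comp_preimage hemb
        (f := fun u => ‖G' u‖) (s := Set.Ici (p + t))).2 hint1
      rwa [hpre] at h
    have hsub : ∫ s in Set.Ici p, ‖G' (s + t)‖ = ∫ u in Set.Ici (p + t), ‖G' u‖ := by
      rw [← hpre]
      exact hmp.setIntegral_preimage_emb hemb (fun u => ‖G' u‖) _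
    have hgi : Integrable g (volume.restrict (Set.Ioi (0:ℝ))) := by
      have hI : Integrable g volume := by
        rw [hg, integrable_indicator_iff measurableSet_Ici]
        exact hint2.mul_const M
      exact hI.restrict
    have hfg : ∀ s : ℝ, ‖f s‖ ≤ g s := by
      intro s
      by_cases hs : s < p
      · have hz : f s = 0 := by
          simp [hf, prolong, hs]
        rw [hz, norm_zero, hg]
        exact Set.indicator_nonneg
          (fun x _ => mul_nonneg (norm_nonneg _) hM0) s
      · push_neg at hs
        rw [hg, Set.indicator_of_mem (Set.mem_Ici.mpr hs)]
        have h1 : ‖f s‖ ≤ ‖G' (s + t)‖ * ‖prolong p H H' s - H s‖ :=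
          (G' (s + t)).le_opNorm _
        have h4 : prolong p H H' s = H' (s - p) := by
          simp [prolong, not_lt.2 hs]
        have h2 : ‖prolong p H H' s - H s‖ ≤ M := by
          rw [h4]
          have hnv := norm_le_vnorm' (H' (s - p) - H s)
          have h3 := vnorm_sub_le' (H' (s - p)) (H s)
          have h5 : vnorm (H' (s - p)) ≤ C' := hC' _ (by linarith)
          have h6 : vnorm (H s) ≤ C := hC s (by linarith)
          rw [hM]
          linarith
        calc ‖f s‖ ≤ ‖G' (s + t)‖ * ‖prolong p H H' s - H s‖ := h1
          _ ≤ ‖G' (s + t)‖ * M := by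
              exact mul_le_mul_of_nonneg_left h2 (norm_nonneg _)
    calc vnorm (∫ s in Set.Ioi (0:ℝ), f s)
        ≤ 3 * ‖∫ s in Set.Ioi (0:ℝ), f s‖ := vnorm_le_three_norm' _
      _ ≤ 3 * ∫ s in Set.Ioi (0:ℝ), ‖f s‖ := by
          have := norm_integral_le_integral_norm
            (μ := volume.restrict (Set.Ioi (0:ℝ))) f
          linarith
      _ ≤ 3 * ∫ s in Set.Ioi (0:ℝ), g s := by
          have := integral_mono_of_nonneg
            (μ := volume.restrict (Set.Ioi (0:ℝ)))
            (Filter.Eventually.of_forall fun s => norm_nonneg (f s)) hgi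
            (Filter.Eventually.of_forall hfg)
          linarith
      _ = 3 * ∫ s in Set.Ici p, ‖G' (s + t)‖ * M := by
          rw [hg, setIntegral_indicator measurableSet_Ici,
            Set.inter_eq_self_of_subset_right (Set.Ici_subset_Ioi.mpr hp)]
      _ = 3 * ((∫ s in Set.Ici p, ‖G' (s + t)‖) * M) := by
          rw [integral_mul_const]
      _ = 3 * ((∫ u in Set.Ici (p + t), ‖G' u‖) * M) := by rw [hsub]
      _ ≤ 3 * (M * Φ p) := by
          have hmono : ∫ u in Set.Ici (p + t), ‖G' u‖ ≤ Φ p := by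
            refine setIntegral_mono_set (hGn.mono_set (Set.Ici_subset_Ici.2 hp.le))
              (Filter.Eventually.of_forall fun u => norm_nonneg _)
              (HasSubset.Subset.eventuallyLE (Set.Ici_subset_Ici.2 (by linarith)))
          nlinarith [hΦnn p]
  -- squeeze
  have hbound : ∀ᶠ p in atTop,
      hdist G' (prolong p H H') H ≤ ENNReal.ofReal (3 * (M * Φ p)) := by
    filter_upwards [eventually_gt_atTop (0:ℝ)] with p hp
    refine iSup_le ?_
    rintro ⟨t, ht⟩
    exact ENNReal.ofReal_le_ofReal (key p hp t ht)
  have hup : Tendsto (fun p => ENNReal.ofReal (3 * (M * Φ p))) atTop (𝓝 0) := by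
    have h1 : Tendsto (fun p => 3 * (M * Φ p)) atTop (𝓝 0) := by
      have h0 := (hΦ0.const_mul M).const_mul (3:ℝ)
      rwa [mul_zero, mul_zero] at h0
    have h2 := ENNReal.tendsto_ofReal h1
    rwa [ENNReal.ofReal_zero] at h2
  exact tendsto_of_tendsto_of_tendsto_of_le_of_le' tendsto_const_nhds hup
    (Filter.Eventually.of_forall fun p => zero_le) hbound
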